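/- Let 0 < ρ < 1 and let (f_j)_{j=0}^{n-1} be maps on the closed interval [-1,1] with f_j([-1,1]) ⊆ [-ρ,ρ] and each f_j ρ-Lipschitz for the hyperbolic metric d_hyp on (-1,1). Define u = f_{n-1} ∘ ⋯ ∘ f_1 ∘ f_0 (0) and v = f_{n-1} ∘ ⋯ ∘ f_1 (0) (omitting f_0). Then |u − v| ≤ artanh(ρ) · ρ^{n-1}. -/

import Mathlib

/-- Inverse hyperbolic tangent. -/
noncomputable def artanh (x : ℝ) : ℝ := (1 / 2) * Real.log ((1 + x) / (1 - x))

/-- The hyperbolic distance on `(-1,1)`: `d_hyp(x,y) = 2|artanh x - artanh y|`. -/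
noncomputable def dHypR (x y : ℝ) : ℝ := 2 * |artanh x - artanh y|

lemma artanh_zero : artanh 0 = 0 := by simp [artanh]

lemma artanh_neg (x : ℝ) : artanh (-x) = - artanh x := by
  have h : (1 + -x) / (1 - -x) = ((1 + x) / (1 - x))⁻¹ := by
    rw [inv_div]; ring_nf
  rw [artanh, h, Real.log_inv, artanh]; ring

lemma artanh_mono {x y : ℝ} (hx : x ∈ Set.Ioo (-1:ℝ) 1) (hy : y ∈ Set.Ioo (-1:ℝ) 1)
    (hxy : x ≤ y) : artanh x ≤ artanh y := by
  obtain ⟨hx1, hx2⟩ := hx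
  obtain ⟨hy1, hy2⟩ := hy
  have h1x : (0:ℝ) < 1 + x := by linarith
  have h2x : (0:ℝ) < 1 - x := by linarith
  have h2y : (0:ℝ) < 1 - y := by linarith
  have hpos : (0:ℝ) < (1 + x) / (1 - x) := div_pos h1x h2x
  have hle : (1 + x) / (1 - x) ≤ (1 + y) / (1 - y) := by
    rw [div_le_div_iff₀ h2x h2y]; nlinarith
  have := Real.log_le_log hpos hle
  unfold artanh; linarith

lemma abs_artanh_le {x ρ : ℝ} (hρ : ρ < 1) (hx : |x| ≤ ρ) : |artanh x| ≤ artanh ρ := by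
  have hρ0 : 0 ≤ ρ := le_trans (abs_nonneg x) hx
  have hxm : x ∈ Set.Ioo (-1:ℝ) 1 := by
    constructor <;> [nlinarith [abs_le.1 hx]; nlinarith [abs_le.1 hx]]
  have hρm : ρ ∈ Set.Ioo (-1:ℝ) 1 := ⟨by linarith, hρ⟩
  have hρm' : -ρ ∈ Set.Ioo (-1:ℝ) 1 := ⟨by linarith, by linarith⟩
  rw [abs_le]
  constructor
  · have := artanh_mono hρm' hxm (by linarith [abs_le.1 hx])
    rw [artanh_neg] at this; linarith
  · exact artanh_mono hxm hρm (abs_le.1 hx).2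

lemma artanh_eq_log_sub {x : ℝ} (hx : x ∈ Set.Ioo (-1:ℝ) 1) :
    artanh x = (1/2) * (Real.log (1 + x) - Real.log (1 - x)) := by
  rw [artanh, Real.log_div (by linarith [hx.1] : (1:ℝ) + x ≠ 0)
    (by linarith [hx.2] : (1:ℝ) - x ≠ 0)]

lemma hasDerivAt_logform {x : ℝ} (hx : x ∈ Set.Ioo (-1:ℝ) 1) :
    HasDerivAt (fun t => (1/2) * (Real.log (1 + t) - Real.log (1 - t)))
      ((1/2) * ((1 + x)⁻¹ + (1 - x)⁻¹)) x := by
  have h1 : HasDerivAt (fun t : ℝ => Real.log (1 + t)) (1 + x)⁻¹ x := by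
    have := (Real.hasDerivAt_log (by linarith [hx.1] : (1:ℝ) + x ≠ 0)).comp x
      ((hasDerivAt_const x (1:ℝ)).add (hasDerivAt_id x))
    simpa [Function.comp_def] using this
  have h2 : HasDerivAt (fun t : ℝ => Real.log (1 - t)) (-(1 - x)⁻¹) x := by
    have := (Real.hasDerivAt_log (by linarith [hx.2] : (1:ℝ) - x ≠ 0)).comp x
      ((hasDerivAt_const x (1:ℝ)).sub (hasDerivAt_id x))
    simpa [Function.comp_def] using this
  have := ((h1.sub h2).const_mul ((1:ℝ)/2))
  exact this.congr_deriv (by ring)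

lemma sub_le_artanh_sub {x y : ℝ} (hx : x ∈ Set.Ioo (-1:ℝ) 1) (hy : y ∈ Set.Ioo (-1:ℝ) 1)
    (hxy : x < y) : y - x ≤ artanh y - artanh x := by
  set g : ℝ → ℝ := fun t => (1/2) * (Real.log (1 + t) - Real.log (1 - t)) with hg
  have hsub : Set.Icc x y ⊆ Set.Ioo (-1:ℝ) 1 := fun t ht =>
    ⟨lt_of_lt_of_le hx.1 ht.1, lt_of_le_of_lt ht.2 hy.2⟩
  have hderiv : ∀ t ∈ Set.Ioo x y,
      HasDerivAt g ((1/2) * ((1 + t)⁻¹ + (1 - t)⁻¹)) t := fun t ht =>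
    hasDerivAt_logform (hsub ⟨le_of_lt ht.1, le_of_lt ht.2⟩)
  have hcont : ContinuousOn g (Set.Icc x y) := fun t ht =>
    ((hasDerivAt_logform (hsub ht)).continuousAt).continuousWithinAt
  obtain ⟨c, hc, hceq⟩ := exists_hasDerivAt_eq_slope g
    (fun t => (1/2) * ((1 + t)⁻¹ + (1 - t)⁻¹)) hxy hcont hderiv
  have hcmem := hsub ⟨le_of_lt hc.1, le_of_lt hc.2⟩
  have h1c : (0:ℝ) < 1 + c := by linarith [hcmem.1]
  have h2c : (0:ℝ) < 1 - c := by linarith [hcmem.2]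
  have hprod : (0:ℝ) < (1 + c) * (1 - c) := mul_pos h1c h2c
  have hge : (1:ℝ) ≤ (1/2) * ((1 + c)⁻¹ + (1 - c)⁻¹) := by
    have hsum : (1:ℝ)/2 * ((1 + c)⁻¹ + (1 - c)⁻¹) = 1 / ((1 + c) * (1 - c)) := by
      field_simp
      ring
    rw [hsum, le_div_iff₀ hprod, one_mul]
    nlinarith [sq_nonneg c]
  have hyx : (0:ℝ) < y - x := by linarith
  have hgyx : g y - g x = (1/2 * ((1 + c)⁻¹ + (1 - c)⁻¹)) * (y - x) := by
    rw [hceq]; field_simp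
  have : y - x ≤ g y - g x := by rw [hgyx]; nlinarith
  rwa [artanh_eq_log_sub hy, artanh_eq_log_sub hx]

lemma abs_sub_le_abs_artanh {x y : ℝ} (hx : x ∈ Set.Ioo (-1:ℝ) 1)
    (hy : y ∈ Set.Ioo (-1:ℝ) 1) : |x - y| ≤ |artanh x - artanh y| := by
  rcases lt_trichotomy x y with h | h | h
  · have := sub_le_artanh_sub hx hy h
    rw [abs_sub_comm, abs_sub_comm (artanh x)]
    rw [abs_of_pos (by linarith), abs_of_nonneg (by linarith)]; linarith
  · simp [h]
  · have := sub_le_artanh_sub hy hx h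
    rw [abs_of_pos (by linarith), abs_of_nonneg (by linarith)]; linarith

/-- Let `0 < ρ < 1` and `f_0, …, f_{n-1}` be maps sending `[-1,1]` into
`[-ρ,ρ]`, each `ρ`-Lipschitz for the hyperbolic metric on `(-1,1)`. If
`u = f_{n-1}∘⋯∘f_0(0)` and `v = f_{n-1}∘⋯∘f_1(0)` (encoded by the orbit sequences
`a`, `b` with `a 0 = 0`, `a (j+1) = f_j (a j)`, `b 1 = 0`, `b (j+1) = f_j (b j)` for
`j ≥ 1`), then `|u − v| ≤ artanh(ρ) · ρ^{n-1}`. -/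
theorem composition_difference_bound
    (ρ : ℝ) (hρ0 : 0 < ρ) (hρ1 : ρ < 1) (n : ℕ) (hn : 1 ≤ n)
    (f : ℕ → ℝ → ℝ)
    (hfmap : ∀ j < n, ∀ x ∈ Set.Icc (-1 : ℝ) 1, f j x ∈ Set.Icc (-ρ) ρ)
    (hflip : ∀ j < n, ∀ x ∈ Set.Ioo (-1 : ℝ) 1, ∀ y ∈ Set.Ioo (-1 : ℝ) 1,
      dHypR (f j x) (f j y) ≤ ρ * dHypR x y)
    (a b : ℕ → ℝ)
    (ha0 : a 0 = 0) (ha : ∀ j < n, a (j + 1) = f j (a j))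
    (hb1 : b 1 = 0) (hb : ∀ j, 1 ≤ j → j < n → b (j + 1) = f j (b j)) :
    |a n - b n| ≤ artanh ρ * ρ ^ (n - 1) := by
  have hIcc : Set.Icc (-ρ) ρ ⊆ Set.Ioo (-1:ℝ) 1 := fun t ht =>
    ⟨by linarith [ht.1], by linarith [ht.2]⟩
  have hIcc' : Set.Icc (-ρ) ρ ⊆ Set.Icc (-1:ℝ) 1 := fun t ht =>
    ⟨by linarith [ht.1], by linarith [ht.2]⟩
  -- main induction
  have key : ∀ j, 1 ≤ j → j ≤ n →
      a j ∈ Set.Icc (-ρ) ρ ∧ b j ∈ Set.Icc (-ρ) ρ ∧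
      dHypR (a j) (b j) ≤ 2 * artanh ρ * ρ ^ (j - 1) := by
    intro j hj
    induction j, hj using Nat.le_induction with
    | base =>
      intro _
      have ha1 : a 1 = f 0 0 := by rw [ha 0 (by omega), ha0]
      have haIcc : a 1 ∈ Set.Icc (-ρ) ρ := by
        rw [ha1]
        exact hfmap 0 (by omega) 0 ⟨by linarith, by linarith⟩
      refine ⟨haIcc, ?_, ?_⟩
      · rw [hb1]; exact ⟨by linarith, by linarith⟩
      · rw [hb1]
        have hart : |artanh (a 1)| ≤ artanh ρ :=
          abs_artanh_le hρ1 (abs_le.mpr ⟨haIcc.1, haIcc.2⟩)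
        simp only [dHypR, artanh_zero, sub_zero, Nat.sub_self, pow_zero, mul_one]
        linarith
    | succ j hj ih =>
      intro hjn
      obtain ⟨haj, hbj, hd⟩ := ih (by omega)
      have hjlt : j < n := by omega
      have haj1 : a (j + 1) ∈ Set.Icc (-ρ) ρ := by
        rw [ha j hjlt]; exact hfmap j hjlt _ (hIcc' haj)
      have hbj1 : b (j + 1) ∈ Set.Icc (-ρ) ρ := by
        rw [hb j hj hjlt]; exact hfmap j hjlt _ (hIcc' hbj)
      refine ⟨haj1, hbj1, ?_⟩
      rw [ha j hjlt, hb j hj hjlt]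
      calc dHypR (f j (a j)) (f j (b j)) ≤ ρ * dHypR (a j) (b j) :=
            hflip j hjlt _ (hIcc haj) _ (hIcc hbj)
        _ ≤ ρ * (2 * artanh ρ * ρ ^ (j - 1)) := by
            apply mul_le_mul_of_nonneg_left hd (le_of_lt hρ0)
        _ = 2 * artanh ρ * ρ ^ ((j + 1) - 1) := by
            have hpow : ρ ^ (j - 1) * ρ = ρ ^ j := by
              rw [← pow_succ]; congr 1; omega
            rw [show (j + 1) - 1 = j from rfl, ← hpow]; ring
  obtain ⟨han, hbn, hdn⟩ := key n hn le_rfl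
  have h1 := abs_sub_le_abs_artanh (hIcc han) (hIcc hbn)
  have : dHypR (a n) (b n) = 2 * |artanh (a n) - artanh (b n)| := rfl
  rw [this] at hdn
  linarith
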